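/- arXiv:2602.17355 — 2 statements merged into one kernel-verified Lean document; each statement's English description precedes it below -/
import Mathlib

section
/- Let G be a group regarded as a one-object category and c : 1 → G the unique functor from the terminal category. Then the pushout category F_≃(G) has exactly one object, and its monoid of endomorphisms is isomorphic to the free monoid on the set G ∖ {e} of non-identity elements of G, via an isomorphism sending, for each g ∈ G ∖ {e}, the free isomorphism [g] to the single-letter word g, and sending the image of the length-one path on the identity element to the empty word. -/
open CategoryTheory

namespace Unrolling

/-- The free category comonad applied to a functor `c : A ⥤ B`, i.e. the induced functor
between path categories. -/
def freeMap {A B : Type*} [Category A] [Category B] (c : A ⥤ B) : Paths A ⥤ Paths B where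
  obj x := c.obj x
  map f := c.toPrefunctor.mapPath f
  map_id _ := rfl
  map_comp f g := c.toPrefunctor.mapPath_comp f g

variable (G : Type) [Group G] {Fs : Type} [SmallCategory Fs]

/-- The unique functor from the terminal category to the one-object category on `G`. -/
def cG : Discrete PUnit.{1} ⥤ SingleObj G := (Functor.const _).obj (SingleObj.star G)

/-- The image in `F_≃(G)` of the length-one path on the arrow `g : G`. -/
def freeArrow (i : Paths (SingleObj G) ⥤ Fs) (g : G) :
    i.obj ((Paths.of (SingleObj G)).obj (SingleObj.star G)) ⟶ i.obj ((Paths.of (SingleObj G)).obj (SingleObj.star G)) :=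
  i.map ((Paths.of (SingleObj G)).map (SingleObj.toEnd G g))

open Classical in
/-- The generating prefunctor of the comparison functor `j`. -/
noncomputable def jFun : Prefunctor (SingleObj G) (SingleObj (FreeMonoid {g : G // g ≠ 1})) where
  obj _ := SingleObj.star _
  map {_ _} g := SingleObj.toEnd _ (if h : g = 1 then 1 else FreeMonoid.of ⟨g, h⟩)

noncomputable def jP : Paths (SingleObj G) ⥤ SingleObj (FreeMonoid {g : G // g ≠ 1}) := Paths.lift (jFun G)

def j₀P : Discrete PUnit.{1} ⥤ SingleObj (FreeMonoid {g : G // g ≠ 1}) :=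
  (Functor.const _).obj (SingleObj.star _)

lemma hcommP : pathComposition (Discrete PUnit.{1}) ⋙ j₀P G = freeMap (cG G) ⋙ jP G := by
  fapply Paths.ext_functor
  · funext x; rfl
  · rintro ⟨⟨⟩⟩ ⟨⟨⟩⟩ e
    simp only [Functor.comp_map, eqToHom_refl, Category.id_comp, Category.comp_id]
    show (j₀P G).map ((pathComposition (Discrete PUnit.{1})).map e.toPath) = (jP G).map ((freeMap (cG G)).map e.toPath)
    rw [show (freeMap (cG G)).map (Quiver.Hom.toPath e) = (Quiver.Hom.toPath (cG G |>.map e)) from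
      Prefunctor.mapPath_toPath _ e]
    rw [show jP G = Paths.lift (jFun G) from rfl]
    erw [Paths.lift_toPath]
    have h1 : (jFun G).map ((cG G).map e) = SingleObj.toEnd _ 1 := by
      simp only [jFun]
      rw [dif_pos (show (cG G).map e = 1 from rfl)]
    erw [h1]; rfl



lemma singleObj_eqToHom {M : Type*} [Monoid M] {x y : SingleObj M} (h : x = y) :
    eqToHom h = (1 : M) := by subst h; rfl

/-- Let `G` be a group regarded as a one-object category, and let
`F_≃(G)` (here `Fs`, with structure maps `i₀` and `i` satisfying the strict universal
property of the pushout in `Cat` of `ε : Paths 1 ⥤ 1` along `F(c) : Paths 1 ⥤ Paths G`).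
Then `F_≃(G)` has exactly one object, and its endomorphism monoid is isomorphic to the free
monoid on `G ∖ {e}`, via an isomorphism sending each free isomorphism `[g]` (`g ≠ e`) to the
single-letter word `g`, and the image of the length-one path on the identity element to the
empty word. -/
theorem pushout_group_free_monoid
    (i₀ : Discrete PUnit.{1} ⥤ Fs) (i : Paths (SingleObj G) ⥤ Fs)
    (hcomm : pathComposition (Discrete PUnit.{1}) ⋙ i₀ = freeMap (cG G) ⋙ i)
    (huniv : ∀ (T : Cat.{0, 0}) (q₀ : Discrete PUnit.{1} ⥤ T) (q : Paths (SingleObj G) ⥤ T),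
      pathComposition (Discrete PUnit.{1}) ⋙ q₀ = freeMap (cG G) ⋙ q →
      ∃! d : Fs ⥤ T, i₀ ⋙ d = q₀ ∧ i ⋙ d = q) :
    (∀ x y : Fs, x = y) ∧
    ∃ φ : End (i.obj ((Paths.of (SingleObj G)).obj (SingleObj.star G))) ≃* FreeMonoid {g : G // g ≠ 1},
      (∀ (g : G) (hg : g ≠ 1), φ (freeArrow G i g) = FreeMonoid.of ⟨g, hg⟩) ∧
      φ (freeArrow G i 1) = 1 := by
  -- the key relation: the length-one path on the identity is mapped to an identity
  have hone : i.map (Quiver.Hom.toPath (𝟙 (SingleObj.star G))) = 𝟙 _ := by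
    have h := Functor.congr_hom hcomm.symm (Quiver.Hom.toPath (𝟙 (Discrete.mk PUnit.unit)))
    erw [Functor.comp_map (freeMap (cG G)) i, Functor.comp_map (pathComposition (Discrete PUnit.{1})) i₀] at h
    rw [show (freeMap (cG G)).map (Quiver.Hom.toPath (𝟙 (Discrete.mk PUnit.unit)))
        = Quiver.Hom.toPath ((cG G).map (𝟙 (Discrete.mk PUnit.unit))) from Prefunctor.mapPath_toPath _ _] at h
    rw [show (pathComposition (Discrete PUnit.{1})).map
        (Quiver.Hom.toPath (𝟙 (Discrete.mk PUnit.unit))) = 𝟙 _ from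
        composePath_toPath _] at h
    erw [CategoryTheory.Functor.map_id i₀, Category.id_comp, eqToHom_trans] at h
    exact h
  -- the comparison functor d into the single-object category on the free monoid
  obtain ⟨d, ⟨hd₀, hd⟩, hdu⟩ : ∃! d : Fs ⥤ SingleObj (FreeMonoid {g : G // g ≠ 1}), i₀ ⋙ d = j₀P G ∧ i ⋙ d = jP G :=
    huniv (Cat.of (SingleObj (FreeMonoid {g : G // g ≠ 1}))) (j₀P G) (jP G) (hcommP G)
  -- the functor e in the other direction
  set e : SingleObj (FreeMonoid {g : G // g ≠ 1}) ⥤ Fs :=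
    SingleObj.functor (FreeMonoid.lift
      (fun p : {g : G // g ≠ 1} =>
        (freeArrow G i p.1 : End (i.obj ((Paths.of (SingleObj G)).obj (SingleObj.star G)))))) with he_def
  have he : jP G ⋙ e = i := by
    fapply Paths.ext_functor
    · funext x
      cases x
      rfl
    · rintro ⟨⟩ ⟨⟩ g
      rw [show (jP G ⋙ e).map (Quiver.Hom.toPath g)
          = e.map ((jFun G).map g) from congrArg e.map (Paths.lift_toPath _ g)]
      by_cases hg : g = 1
      · subst hg
        rw [show (jFun G).map (1 : G) = SingleObj.toEnd _ 1 from by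
          simp only [jFun]; rw [dif_pos trivial]]
        erw [Category.id_comp, Category.comp_id]
        rw [show e.map (SingleObj.toEnd _ 1) = 𝟙 _ from e.map_id (SingleObj.star _)]
        exact hone.symm
      · rw [show (jFun G).map g = SingleObj.toEnd _ (FreeMonoid.of ⟨g, hg⟩) from by
          simp only [jFun]; rw [dif_neg hg]]
        erw [Category.id_comp, Category.comp_id]
        have hf := FreeMonoid.lift_eval_of (M := End (i.obj ((Paths.of (SingleObj G)).obj (SingleObj.star G))))
          (fun p : {g : G // g ≠ 1} =>
            (freeArrow G i p.1 : End (i.obj ((Paths.of (SingleObj G)).obj (SingleObj.star G))))) ⟨g, hg⟩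
        exact hf
  have he₀ : j₀P G ⋙ e = i₀ := by
    refine CategoryTheory.Functor.ext ?_ ?_
    · intro x
      exact (Functor.congr_obj hcomm x).symm
    · rintro ⟨⟨⟩⟩ ⟨⟨⟩⟩ ⟨⟨h⟩⟩
      rw [show (⟨⟨h⟩⟩ : Discrete.mk PUnit.unit ⟶ Discrete.mk PUnit.unit)
          = 𝟙 (Discrete.mk PUnit.unit) from rfl]
      simp
      erw [eqToHom_trans]
      rfl
  -- d ⋙ e is the identity
  obtain ⟨k, -, hku⟩ : ∃! d : Fs ⥤ Fs, i₀ ⋙ d = i₀ ∧ i ⋙ d = i := huniv (Cat.of Fs) i₀ i hcomm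
  have h1 : d ⋙ e = 𝟭 Fs := by
    rw [hku (d ⋙ e) ⟨by rw [← Functor.assoc, hd₀, he₀], by rw [← Functor.assoc, hd, he]⟩,
      hku (𝟭 Fs) ⟨Functor.comp_id _, Functor.comp_id _⟩]
  -- computation of d on free arrows
  have hgen : ∀ g : G, (d.map (freeArrow G i g) : FreeMonoid {g : G // g ≠ 1})
      = (jFun G).map (X := SingleObj.star G) (Y := SingleObj.star G) g := by
    intro g
    have h := Functor.congr_hom hd (Quiver.Hom.toPath (SingleObj.toEnd G g))
    erw [Functor.comp_map] at h
    rw [show (jP G).map (Quiver.Hom.toPath (SingleObj.toEnd G g))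
        = (jFun G).map (SingleObj.toEnd G g) from Paths.lift_toPath _ _] at h
    rw [show (freeArrow G i g : _) = i.map (Quiver.Hom.toPath (SingleObj.toEnd G g)) from rfl]
    erw [h, singleObj_eqToHom, SingleObj.comp_as_mul, SingleObj.comp_as_mul]
    show (1 : FreeMonoid {g : G // g ≠ 1})
        * ((jFun G).map (X := SingleObj.star G) (Y := SingleObj.star G) (SingleObj.toEnd G g))
        * (1 : FreeMonoid {g : G // g ≠ 1})
      = (jFun G).map (X := SingleObj.star G) (Y := SingleObj.star G) g
    rw [one_mul, mul_one]
    rfl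
  -- d ∘ e is the identity on the free monoid
  have key : ∀ p : {g : G // g ≠ 1},
      (d.map (e.map (X := SingleObj.star _) (Y := SingleObj.star _) (FreeMonoid.of p))
        : FreeMonoid {g : G // g ≠ 1}) = FreeMonoid.of p := by
    intro p
    have hf := FreeMonoid.lift_eval_of (M := End (i.obj ((Paths.of (SingleObj G)).obj (SingleObj.star G))))
      (fun p : {g : G // g ≠ 1} =>
        (freeArrow G i p.1 : End (i.obj ((Paths.of (SingleObj G)).obj (SingleObj.star G))))) p
    rw [show e.map (X := SingleObj.star _) (Y := SingleObj.star _) (FreeMonoid.of p)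
        = freeArrow G i p.1 from hf]
    erw [hgen]
    simp only [jFun]
    rw [dif_neg p.2]
    rfl
  have hr : ∀ m : FreeMonoid {g : G // g ≠ 1},
      (d.map (e.map (X := SingleObj.star _) (Y := SingleObj.star _) m)
        : FreeMonoid {g : G // g ≠ 1}) = m := by
    intro m
    induction m using FreeMonoid.inductionOn with
    | one =>
        rw [show ((1 : FreeMonoid {g : G // g ≠ 1})
            : SingleObj.star (FreeMonoid {g : G // g ≠ 1})
              ⟶ SingleObj.star (FreeMonoid {g : G // g ≠ 1}))
            = 𝟙 (SingleObj.star (FreeMonoid {g : G // g ≠ 1})) from rfl,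
          e.map_id, d.map_id]
        rfl
    | of p => exact key p
    | mul x y hx hy =>
        have h3 : e.map (X := SingleObj.star _) (Y := SingleObj.star _) (x * y)
            = e.map (X := SingleObj.star _) (Y := SingleObj.star _) y
              ≫ e.map (X := SingleObj.star _) (Y := SingleObj.star _) x :=
          e.map_comp (X := SingleObj.star _) (Y := SingleObj.star _) (Z := SingleObj.star _) y x
        have h4 : (d.map (e.map (X := SingleObj.star _) (Y := SingleObj.star _) (x * y))
            : FreeMonoid {g : G // g ≠ 1})
            = d.map (e.map (X := SingleObj.star _) (Y := SingleObj.star _) y)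
              ≫ d.map (e.map (X := SingleObj.star _) (Y := SingleObj.star _) x) := by
          rw [h3, d.map_comp]
        rw [h4, hx, hy]
        rfl
  -- all objects are equal
  have hobj : ∀ x y : Fs, x = y := by
    intro x y
    have hx := Functor.congr_obj h1 x
    have hy := Functor.congr_obj h1 y
    exact hx.symm.trans hy
  refine ⟨hobj, ⟨{ toFun := fun f => d.map f
                   invFun := fun m => e.map (X := SingleObj.star _) (Y := SingleObj.star _) m
                   left_inv := ?_
                   right_inv := hr
                   map_mul' := ?_ }, ?_, ?_⟩⟩
  · intro f
    have h := Functor.congr_hom h1 f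
    exact h.trans ((Category.id_comp _).trans (Category.comp_id _))
  · intro a b
    show (d.map (b ≫ a) : FreeMonoid {g : G // g ≠ 1}) = _
    rw [d.map_comp]
    rfl
  · intro g hg
    show (d.map (freeArrow G i g) : FreeMonoid {g : G // g ≠ 1}) = _
    rw [hgen]
    simp only [jFun]
    rw [dif_neg hg]
    rfl
  · show (d.map (freeArrow G i 1) : FreeMonoid {g : G // g ≠ 1}) = _
    rw [hgen]
    simp only [jFun]
    rw [dif_pos trivial]
    rfl

end Unrolling
end

section
/- Let G be a group regarded as a one-object category and let g be a non-identity element of G. In the category D_G there are exactly two morphisms from the object given by the identity morphism of the unique object to the object [g]: the pair (u, v) = ([g], id) and the pair (u, v) = (id, [g]). -/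
open CategoryTheory

universe u

namespace Unrolling

/-- A morphism is "an identity" if it is the `eqToHom` of an equality of objects. -/
def IsIdArrow {C : Type*} [Category C] {x y : C} (m : x ⟶ y) : Prop :=
  ∃ h : x = y, m = eqToHom h

/-- A morphism lies in the image of the functor `F` (up to the evident equalities of objects). -/
def InImg {A C : Type*} [Category A] [Category C] (F : A ⥤ C) {x y : C} (m : x ⟶ y) : Prop :=
  ∃ (a b : A) (k : a ⟶ b) (ha : F.obj a = x) (hb : F.obj b = y),
    m = eqToHom ha.symm ≫ F.map k ≫ eqToHom hb

/-- A "free isomorphism": the image under `i : Paths R ⥤ F_≃(R)` of a length-one path whose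
arrow is an isomorphism of `R`. -/
def FreeIso {R Fs : Type*} [Category R] [Category Fs] (i : Paths R ⥤ Fs)
    {x y : Fs} (m : x ⟶ y) : Prop :=
  ∃ (a b : R) (f : a ⟶ b) (ha : i.obj ((Paths.of R).obj a) = x) (hb : i.obj ((Paths.of R).obj b) = y),
    IsIso f ∧ m = eqToHom ha.symm ≫ i.map ((Paths.of R).map f) ≫ eqToHom hb

/-- The twisted arrow category of `C`: objects are morphisms of `C`. -/
structure Tw (C : Type*) [Category C] where
  left : C
  right : C
  hom : left ⟶ right

/-- Morphisms `f → f'` in the twisted arrow category: pairs `(u, v)` with `f' = u ≫ f ≫ v`. -/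
@[ext]
structure TwHom {C : Type*} [Category C] (X Y : Tw C) where
  u : Y.left ⟶ X.left
  v : X.right ⟶ Y.right
  w : Y.hom = u ≫ X.hom ≫ v

instance {C : Type*} [Category C] : Category (Tw C) where
  Hom := TwHom
  id X := ⟨𝟙 _, 𝟙 _, by simp⟩
  comp {X Y Z} f g := ⟨g.u ≫ f.u, f.v ≫ g.v, by rw [g.w, f.w]; simp⟩
  id_comp f := by apply TwHom.ext <;> simp [CategoryStruct.id, CategoryStruct.comp]
  comp_id f := by apply TwHom.ext <;> simp [CategoryStruct.id, CategoryStruct.comp]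
  assoc f g h := by apply TwHom.ext <;> simp [CategoryStruct.comp]

/-- The defining property of the objects of `D_R` inside the twisted arrow category of
`F_≃(R)`. -/
def InD {R₀ R Fs : Type*} [Category R₀] [Category R] [Category Fs]
    (i₀ : R₀ ⥤ Fs) (i : Paths R ⥤ Fs) (X : Tw Fs) : Prop :=
  ∃ (z : Fs) (g : X.left ⟶ z) (h : z ⟶ X.right),
    X.hom = g ≫ h ∧ (IsIdArrow g ∨ InImg i₀ g) ∧ (IsIdArrow h ∨ FreeIso i h)

/-- The category `D_R`, a full subcategory of the twisted arrow category of `F_≃(R)`. -/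
abbrev DR {R₀ R Fs : Type*} [Category R₀] [Category R] [Category Fs]
    (i₀ : R₀ ⥤ Fs) (i : Paths R ⥤ Fs) := ObjectProperty.FullSubcategory (InD i₀ i)

variable (G : Type) [Group G] {Fs : Type} [SmallCategory Fs]

/-- The object of `D_G` given by the identity morphism of the unique object of `F_≃(G)`. -/
def idObj (i₀ : Discrete PUnit.{1} ⥤ Fs) (i : Paths (SingleObj G) ⥤ Fs) : DR i₀ i :=
  ⟨⟨_, _, 𝟙 (i.obj ((Paths.of (SingleObj G)).obj (SingleObj.star G)))⟩,
    ⟨_, 𝟙 _, 𝟙 _, by simp, Or.inl ⟨rfl, rfl⟩, Or.inl ⟨rfl, rfl⟩⟩⟩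

/-- The object of `D_G` given by the free isomorphism `[g]`. -/
def freeObj (i₀ : Discrete PUnit.{1} ⥤ Fs) (i : Paths (SingleObj G) ⥤ Fs) (g : G) : DR i₀ i :=
  ⟨⟨_, _, freeArrow G i g⟩,
    ⟨_, 𝟙 _, freeArrow G i g, by simp,
      Or.inl ⟨rfl, rfl⟩,
      Or.inr ⟨SingleObj.star G, SingleObj.star G, SingleObj.toEnd G g, rfl, rfl,
        inferInstance, by simp [freeArrow]⟩⟩⟩

/-- The morphism from the identity object of `D_G` to `[g]` with components `(u, v) = ([g], id)`. -/
def homL (i₀ : Discrete PUnit.{1} ⥤ Fs) (i : Paths (SingleObj G) ⥤ Fs) (g : G) :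
    idObj G i₀ i ⟶ freeObj G i₀ i g :=
  ⟨freeArrow G i g, 𝟙 _, by simp [idObj, freeObj]⟩

/-- The morphism from the identity object of `D_G` to `[g]` with components `(u, v) = (id, [g])`. -/
def homR (i₀ : Discrete PUnit.{1} ⥤ Fs) (i : Paths (SingleObj G) ⥤ Fs) (g : G) :
    idObj G i₀ i ⟶ freeObj G i₀ i g :=
  ⟨𝟙 _, freeArrow G i g, by simp [idObj, freeObj]⟩


/-! ### Auxiliary: a concrete model of the pushout -/

/-- The single object of the concrete model. -/
structure TObj (G : Type) : Type where

/-- Non-identity letters. -/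
abbrev Letter := {x : G // x ≠ 1}

instance : SmallCategory (TObj G) where
  Hom _ _ := List (Letter G)
  id _ := []
  comp f g := List.append f g
  id_comp f := List.nil_append f
  comp_id f := List.append_nil f
  assoc f g h := List.append_assoc f g h

lemma TObj.eqToHom_eq {a b : TObj G} (h : a = b) :
    eqToHom h = ([] : List (Letter G)) := by subst h; rfl

lemma TObj.comp_eq {a b c : TObj G} (f : a ⟶ b) (g : b ⟶ c) :
    f ≫ g = List.append f g := rfl

lemma TObj.id_eq (a : TObj G) : 𝟙 a = ([] : List (Letter G)) := rfl

open Classical in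
/-- Reduced word of a single letter. -/
noncomputable def toList (x : G) : List (Letter G) :=
  if h : x = 1 then [] else [⟨x, h⟩]

/-- The comparison functor from the path category to the concrete model. -/
noncomputable def qFun : Paths (SingleObj G) ⥤ TObj G :=
  Paths.lift ⟨fun _ => ⟨⟩, fun f => toList G f⟩

/-- The functor from the terminal category to the concrete model. -/
def q0Fun : Discrete PUnit.{1} ⥤ TObj G := (Functor.const _).obj ⟨⟩

lemma hcommT : pathComposition (Discrete PUnit.{1}) ⋙ q0Fun G
    = freeMap (cG G) ⋙ qFun G := by
  refine Paths.ext_functor ?_ ?_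
  · rfl
  intro a b e
  have h1 : (pathComposition (Discrete PUnit.{1}) ⋙ q0Fun G).map e.toPath = 𝟙 _ := by
    simp [q0Fun]
    rfl
  have h2 : (freeMap (cG G) ⋙ qFun G).map e.toPath = (qFun G).map ((cG G).map e).toPath := by
    simp [freeMap, Prefunctor.mapPath_toPath]
    rfl
  rw [h1, h2]
  have : (cG G).map e = 𝟙 (SingleObj.star G) := by simp [cG]
  rw [this]
  have h3 : toList G (𝟙 (SingleObj.star G)) = [] := dif_pos rfl
  simp [qFun, TObj.eqToHom_eq, TObj.id_eq, TObj.comp_eq, h3]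

variable {G} in
/-- Evaluation of a word in `Fs`. -/
def ev (i : Paths (SingleObj G) ⥤ Fs) : List (Letter G) → (i.obj ((Paths.of (SingleObj G)).obj (SingleObj.star G)) ⟶
    i.obj ((Paths.of (SingleObj G)).obj (SingleObj.star G))) :=
  fun l => l.foldr (fun a m => freeArrow G i a.1 ≫ m) (𝟙 _)

variable {G} in
lemma ev_append (i : Paths (SingleObj G) ⥤ Fs) (l l' : List (Letter G)) :
    ev i (l ++ l') = ev i l ≫ ev i l' := by
  induction l with
  | nil => simp [ev]
  | cons a l ih => simp [ev] at ih ⊢; rw [ih]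

/-- The section of the comparison functor. -/
def eFun (i : Paths (SingleObj G) ⥤ Fs) : TObj G ⥤ Fs where
  obj _ := i.obj ((Paths.of (SingleObj G)).obj (SingleObj.star G))
  map l := ev i l
  map_id _ := rfl
  map_comp f g := by exact ev_append i f g

variable {G} in
lemma ev_toList (i : Paths (SingleObj G) ⥤ Fs) (x : G)
    (hone : i.map ((Paths.of (SingleObj G)).map (𝟙 (SingleObj.star G))) = 𝟙 _) :
    ev i (toList G x) = i.map ((Paths.of (SingleObj G)).map x) := by
  by_cases h : x = 1
  · subst h
    simp [toList, ev]
    exact hone.symm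
  · simp [toList, h, ev, freeArrow]
    rfl

variable {G} in
lemma i_map_one (i : Paths (SingleObj G) ⥤ Fs) (i₀ : Discrete PUnit.{1} ⥤ Fs)
    (hcomm : pathComposition (Discrete PUnit.{1}) ⋙ i₀ = freeMap (cG G) ⋙ i) :
    i.map ((Paths.of (SingleObj G)).map (𝟙 (SingleObj.star G))) = 𝟙 _ := by
  have h := Functor.congr_hom hcomm ((𝟙 (⟨PUnit.unit⟩ : Discrete PUnit.{1})).toPath)
  have h0 : (pathComposition (Discrete PUnit.{1}) ⋙ i₀).map ((𝟙 (⟨PUnit.unit⟩ : Discrete PUnit.{1})).toPath) = 𝟙 _ := by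
    exact (congrArg i₀.map (composePath_toPath _)).trans (i₀.map_id _)
  rw [h0, eq_comm, eqToHom_comp_iff, comp_eqToHom_iff] at h
  refine h.trans ?_
  simp only [Category.comp_id, eqToHom_trans]
  rfl

variable {G} in
lemma q_comp_e (i : Paths (SingleObj G) ⥤ Fs)
    (hone : i.map ((Paths.of (SingleObj G)).map (𝟙 (SingleObj.star G))) = 𝟙 _) :
    qFun G ⋙ eFun G i = i := by
  refine Paths.ext_functor ?_ ?_
  · rfl
  · intro a b e
    have h1 : (qFun G ⋙ eFun G i).map e.toPath = ev i (toList G e) := by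
      simp [qFun, eFun]
      rfl
    rw [h1, ev_toList i e hone]
    simp
    exact (by simp : i.map e.toPath = 𝟙 _ ≫ i.map e.toPath ≫ 𝟙 _)

variable {G} in
lemma q0_comp_e (i : Paths (SingleObj G) ⥤ Fs) (i₀ : Discrete PUnit.{1} ⥤ Fs)
    (hcomm : pathComposition (Discrete PUnit.{1}) ⋙ i₀ = freeMap (cG G) ⋙ i) :
    q0Fun G ⋙ eFun G i = i₀ := by
  have hobj : ∀ X : Discrete PUnit.{1},
      (q0Fun G ⋙ eFun G i).obj X = i₀.obj X := by
    intro X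
    exact (Functor.congr_obj hcomm X).symm
  refine CategoryTheory.Functor.ext hobj ?_
  intro X Y f
  obtain ⟨⟨⟩⟩ := X
  obtain ⟨⟨⟩⟩ := Y
  have hf : f = 𝟙 _ := Subsingleton.elim _ _
  subst hf
  simp [q0Fun, eFun]
  exact ((eqToHom_trans _ _).trans (eqToHom_refl _ _)).symm

/-- Let `G` be a group regarded as a one-object category and `g` a
non-identity element.  In `D_G` there are exactly two morphisms from the identity object to
`[g]`: the pair `(u, v) = ([g], id)` and the pair `(u, v) = (id, [g])`. -/
theorem DG_exactly_two_homs_from_id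
    (i₀ : Discrete PUnit.{1} ⥤ Fs) (i : Paths (SingleObj G) ⥤ Fs)
    (hcomm : pathComposition (Discrete PUnit.{1}) ⋙ i₀ = freeMap (cG G) ⋙ i)
    (huniv : ∀ (T : Cat.{0, 0}) (q₀ : Discrete PUnit.{1} ⥤ T) (q : Paths (SingleObj G) ⥤ T),
      pathComposition (Discrete PUnit.{1}) ⋙ q₀ = freeMap (cG G) ⋙ q →
      ∃! d : Fs ⥤ T, i₀ ⋙ d = q₀ ∧ i ⋙ d = q)
    (g : G) (hg : g ≠ 1) :
    homL G i₀ i g ≠ homR G i₀ i g ∧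
    ∀ t : idObj G i₀ i ⟶ freeObj G i₀ i g, t = homL G i₀ i g ∨ t = homR G i₀ i g := by
  have hone := i_map_one i i₀ hcomm
  obtain ⟨d, ⟨hd0, hd1⟩, -⟩ := huniv (Cat.of (TObj G)) (q0Fun G) (qFun G) (hcommT G)
  obtain ⟨d', -, hu⟩ := huniv (Cat.of Fs) i₀ i hcomm
  have hde : d ⋙ eFun G i = 𝟭 Fs := by
    have e1 : i₀ ⋙ (d ⋙ eFun G i) = i₀ := by
      exact (Functor.assoc _ _ _).symm.trans ((congrArg (· ⋙ eFun G i) hd0).trans (q0_comp_e i i₀ hcomm))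
    have e2 : i ⋙ (d ⋙ eFun G i) = i := by
      exact (Functor.assoc _ _ _).symm.trans ((congrArg (· ⋙ eFun G i) hd1).trans (q_comp_e i hone))
    rw [hu _ ⟨e1, e2⟩, ← hu (𝟭 Fs) ⟨Functor.comp_id _, Functor.comp_id _⟩]
  have hrec : ∀ m : i.obj ((Paths.of (SingleObj G)).obj (SingleObj.star G)) ⟶
      i.obj ((Paths.of (SingleObj G)).obj (SingleObj.star G)), (eFun G i).map (d.map m) = m := by
    intro m
    have h := Functor.congr_hom hde m
    simp at h
    exact h.trans (by simp : 𝟙 _ ≫ m ≫ 𝟙 _ = m)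
  have hdfree : d.map (freeArrow G i g) = ([⟨g, hg⟩] : List (Letter G)) := by
    have h := Functor.congr_hom hd1 ((Paths.of (SingleObj G)).map (SingleObj.toEnd G g))
    have h2 : (qFun G).map ((Paths.of (SingleObj G)).map (SingleObj.toEnd G g)) = toList G g := by
      simp [qFun]
      rfl
    rw [h2] at h
    have h3 : toList G g = [⟨g, hg⟩] := dif_neg hg
    rw [h3] at h
    rw [show freeArrow G i g = i.map ((Paths.of (SingleObj G)).map (SingleObj.toEnd G g)) from rfl]
    rw [show d.map (i.map ((Paths.of (SingleObj G)).map (SingleObj.toEnd G g)))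
      = (i ⋙ d).map ((Paths.of (SingleObj G)).map (SingleObj.toEnd G g)) from rfl, h]
    simp [TObj.eqToHom_eq, TObj.comp_eq]
    rfl
  constructor
  · intro h
    have h2 : (homL G i₀ i g).hom.v = (homR G i₀ i g).hom.v := congrArg (fun t => t.hom.v) h
    have h3 : 𝟙 _ = freeArrow G i g := h2
    have h4 := congrArg d.map h3
    rw [hdfree, d.map_id] at h4
    exact absurd (show ([] : List (Letter G)) = [⟨g, hg⟩] from h4) (List.cons_ne_nil _ _).symm
  · intro t
    have hw : freeArrow G i g = t.hom.u ≫ t.hom.v := by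
      have := t.hom.w
      simpa [idObj, freeObj] using this
    obtain ⟨lu, hcu⟩ : ∃ l : List (Letter G), d.map t.hom.u = l := ⟨d.map t.hom.u, rfl⟩
    obtain ⟨lv, hcv⟩ : ∃ l : List (Letter G), d.map t.hom.v = l := ⟨d.map t.hom.v, rfl⟩
    have hl : d.map t.hom.u ≫ d.map t.hom.v = ([⟨g, hg⟩] : List (Letter G)) := by
      exact (d.map_comp _ _).symm.trans ((congrArg d.map hw.symm).trans hdfree)
    replace hl : lu ++ lv = ([⟨g, hg⟩] : List (Letter G)) := by rw [← hcu, ← hcv]; exact hl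
    have hl' : lu ++ lv = ([⟨g, hg⟩] : List (Letter G)) := hl
    rcases lu with _ | ⟨a, l⟩
    · right
      simp only [List.nil_append] at hl'
      subst hl'
      have hu' : t.hom.u = 𝟙 _ := by
        rw [← hrec t.hom.u]; erw [hcu]; rfl
      have hv' : t.hom.v = freeArrow G i g := by
        rw [← hrec t.hom.v]; erw [hcv]
        simp [eFun, ev]
        rfl
      apply InducedCategory.hom_ext
      apply TwHom.ext
      · exact hu'
      · exact hv'
    · left
      simp only [List.cons_append, List.cons.injEq, List.append_eq_nil_iff] at hl'
      obtain ⟨ha, hl0, hv0⟩ := hl'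
      subst ha; subst hl0; subst hv0
      have hu' : t.hom.u = freeArrow G i g := by
        rw [← hrec t.hom.u]; erw [hcu]
        simp [eFun, ev]
        rfl
      have hv' : t.hom.v = 𝟙 _ := by
        rw [← hrec t.hom.v]; erw [hcv]; rfl
      apply InducedCategory.hom_ext
      apply TwHom.ext
      · exact hu'
      · exact hv'

end Unrolling
end
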